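/- Let (X,G) be a CR-dynamical system such that X has no isolated points and let x ∈ X. If x ∈ trans_1(G), then for each trajectory 𝐱 of x and each positive integer n, the n-th coordinate π_n(𝐱) belongs to trans_1(G). -/

import Mathlib

/-- A trajectory of `x` in the CR-dynamical system `(X, G)`:
a sequence `(x₁, x₂, x₃, …)` (indexed here from `0`) with `x₁ = x` and
`(xᵢ, xᵢ₊₁) ∈ G` for every `i`. -/
def IsTraj {X : Type*} (G : Set (X × X)) (x : X) (s : ℕ → X) : Prop :=
  s 0 = x ∧ ∀ n : ℕ, (s n, s (n + 1)) ∈ G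

/-- `RelImg G n A` is `G^n(A)`: all `y` such that for some `x ∈ A` there are
`x₁, …, x_{n+1}` with `x₁ = x`, `x_{n+1} = y` and `(xᵢ, xᵢ₊₁) ∈ G` for each `i ≤ n`.
For `n = 0` this gives `A` itself. -/
def RelImg {X : Type*} (G : Set (X × X)) (n : ℕ) (A : Set X) : Set X :=
  {y | ∃ x ∈ A, ∃ f : ℕ → X, f 0 = x ∧ f n = y ∧ ∀ i < n, (f i, f (i + 1)) ∈ G}

/-- The inverse relation `G⁻¹ = {(y, x) | (x, y) ∈ G}`. -/
def RelInv {X : Type*} (G : Set (X × X)) : Set (X × X) := Prod.swap ⁻¹' G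

/-- `x` is a legal point of `(X, G)`: it has at least one trajectory. -/
def Legal {X : Type*} (G : Set (X × X)) (x : X) : Prop := ∃ s : ℕ → X, IsTraj G x s

/-- `U_G^⊕(x)`: the union of the forward orbits of all trajectories of `x`. -/
def UOrb {X : Type*} (G : Set (X × X)) (x : X) : Set X :=
  ⋃ s ∈ {s : ℕ → X | IsTraj G x s}, Set.range s

/-- The set of 1-transitive points: legal points all of whose trajectories have
dense forward orbit. -/
def Trans1 {X : Type*} [MetricSpace X] (G : Set (X × X)) : Set X :=
  {x | Legal G x ∧ ∀ s : ℕ → X, IsTraj G x s → Dense (Set.range s)}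

/-- The set of 2-transitive points: points having a trajectory with dense forward
orbit. -/
def Trans2 {X : Type*} [MetricSpace X] (G : Set (X × X)) : Set X :=
  {x | ∃ s : ℕ → X, IsTraj G x s ∧ Dense (Set.range s)}

/-- The set of 3-transitive points: legal points `x` with `U_G^⊕(x)` dense. -/
def Trans3 {X : Type*} [MetricSpace X] (G : Set (X × X)) : Set X :=
  {x | Legal G x ∧ Dense (UOrb G x)}

/-- The set of intransitive points: legal points that are not 3-transitive. -/
def Intrans {X : Type*} [MetricSpace X] (G : Set (X × X)) : Set X :=
  {x | Legal G x ∧ ¬ Dense (UOrb G x)}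

/-- `(X, G)` is transitive: for all nonempty open `U, V` there is `n ≥ 0` with
`G^n(U) ∩ V ≠ ∅`. -/
def CRTransitive {X : Type*} [MetricSpace X] (G : Set (X × X)) : Prop :=
  ∀ U V : Set X, IsOpen U → U.Nonempty → IsOpen V → V.Nonempty →
    ∃ n : ℕ, (RelImg G n U ∩ V).Nonempty

/-- `(X, G)` is +transitive: for all nonempty open `U, V` there is `n ≥ 1` with
`G^n(U) ∩ V ≠ ∅`. -/
def CRPlusTransitive {X : Type*} [MetricSpace X] (G : Set (X × X)) : Prop :=
  ∀ U V : Set X, IsOpen U → U.Nonempty → IsOpen V → V.Nonempty →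
    ∃ n : ℕ, 0 < n ∧ (RelImg G n U ∩ V).Nonempty

/-- If `X` has no isolated points and `x ∈ trans₁(G)`, then every coordinate of
every trajectory of `x` belongs to `trans₁(G)`. -/
theorem stmt10 {X : Type*} [MetricSpace X] [CompactSpace X] [Nonempty X]
    (G : Set (X × X)) (hGc : IsClosed G) (hGne : G.Nonempty)
    (hiso : ∀ z : X, ¬ IsOpen ({z} : Set X))
    (x : X) (hx : x ∈ Trans1 G) :
    ∀ s : ℕ → X, IsTraj G x s → ∀ n : ℕ, s n ∈ Trans1 G := by
  intro s hs n
  obtain ⟨-, hdense⟩ := hx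
  refine ⟨⟨fun k => s (n + k), rfl, fun k => by simpa [Nat.add_assoc] using hs.2 (n + k)⟩, ?_⟩
  intro t ht
  set u : ℕ → X := fun k => if k < n then s k else t (k - n) with hu
  have hutraj : IsTraj G x u := by
    constructor
    · by_cases h0 : 0 < n
      · simp [hu, h0, hs.1]
      · have hn0 : n = 0 := by omega
        simpa [hu, hn0] using ht.1.trans (hn0 ▸ hs.1)
    · intro k
      rcases lt_trichotomy (k + 1) n with h | h | h
      · have hk : k < n := Nat.lt_of_succ_lt h
        simpa [hu, hk, h] using hs.2 k
      · have hk : k < n := by omega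
        have e1 : u (k + 1) = s n := by simp [hu, h, ht.1]
        have e0 : u k = s k := by simp [hu, hk]
        rw [e0, e1, ← h]
        exact hs.2 k
      · have hk : ¬ k < n := by omega
        have hk1 : ¬ k + 1 < n := by omega
        have e : k + 1 - n = (k - n) + 1 := by omega
        simpa [hu, hk, hk1, e] using ht.2 (k - n)
  have hdu := hdense u hutraj
  -- range u ⊆ (s '' Iio n) ∪ range t
  have hsub : Set.range u ⊆ s '' Set.Iio n ∪ Set.range t := by
    rintro z ⟨k, rfl⟩
    by_cases hk : k < n
    · exact Or.inl ⟨k, hk, by simp [hu, hk]⟩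
    · exact Or.inr ⟨k - n, by simp [hu, hk]⟩
  have hfin : (s '' Set.Iio n).Finite := (Set.finite_Iio n).image s
  have hclosedfin : IsClosed (s '' Set.Iio n) := hfin.isClosed
  have hcover : (Set.univ : Set X) ⊆ s '' Set.Iio n ∪ closure (Set.range t) := by
    intro z _
    have hz : z ∈ closure (Set.range u) := hdu z
    have : closure (Set.range u) ⊆ closure (s '' Set.Iio n ∪ Set.range t) :=
      closure_mono hsub
    have hz2 := this hz
    rw [closure_union, hclosedfin.closure_eq] at hz2
    exact hz2
  -- the complement of closure(range t) is open and contained in a finite set, hence empty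
  have hU : IsOpen ((closure (Set.range t))ᶜ) := isClosed_closure.isOpen_compl
  have hUsub : (closure (Set.range t))ᶜ ⊆ s '' Set.Iio n := by
    intro z hz
    rcases hcover (Set.mem_univ z) with h | h
    · exact h
    · exact absurd h hz
  have hUempty : (closure (Set.range t))ᶜ = ∅ := by
    by_contra hne
    obtain ⟨z, hz⟩ := Set.nonempty_iff_ne_empty.mpr hne
    have hfinU : ((closure (Set.range t))ᶜ).Finite := hfin.subset hUsub
    have hzopen : IsOpen ({z} : Set X) := by
      have : ({z} : Set X) = (closure (Set.range t))ᶜ \ ((closure (Set.range t))ᶜ \ {z}) := by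
        ext w
        simp only [Set.mem_diff, Set.mem_singleton_iff]
        constructor
        · rintro rfl; exact ⟨hz, fun h => h.2 rfl⟩
        · rintro ⟨hwU, h⟩
          by_contra hw
          exact h ⟨hwU, hw⟩
      rw [this]
      exact hU.sdiff ((Set.Finite.diff hfinU : ((closure (Set.range t))ᶜ \ {z}).Finite).isClosed)
    exact hiso z hzopen
  intro z
  have : closure (Set.range t) = Set.univ := by
    have := compl_compl (closure (Set.range t))
    rw [hUempty] at this
    simpa using this.symm
  simp [this]
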